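/- Let J be continuous, nonnegative, bounded with ∫_ℝ J = 1 and J(0) > 0, let {J_n} be nondecreasing compactly supported continuous approximations with J_n ≤ J and J_n → J locally uniformly, and let ν_n minimize η_n(ν) = ∫_ℝ J_n(x) e^{-ν x} dx + c ν. Then the sequence {ν_n} is bounded. -/

import Mathlib

open MeasureTheory Real Filter Set

lemma stmt17_exp_quad (x : ℝ) (hx : 0 ≤ x) : x ^ 2 / 4 ≤ Real.exp x := by
  have h := Real.add_one_le_exp (x / 2)
  have h2 : Real.exp (x / 2) * Real.exp (x / 2) = Real.exp x := by
    rw [← Real.exp_add]; ring_nf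
  nlinarith [Real.exp_pos (x / 2)]

/-- with `Jₙ` a nondecreasing compactly supported approximating sequence of
`J` and `νₙ` a minimizer of `ηₙ(ν) = ∫ Jₙ(x) e^{-ν x} dx + c ν`, the sequence `{νₙ}` is
bounded. -/
theorem stmt17 (J : ℝ → ℝ) (hJcont : Continuous J) (hJbdd : ∃ C, ∀ x, J x ≤ C)
    (hJnonneg : ∀ x, 0 ≤ J x) (hJ0 : 0 < J 0) (hJL1 : Integrable J)
    (hJint : ∫ x, J x = 1) (c : ℝ)
    (Jn : ℕ → ℝ → ℝ)
    (hJncont : ∀ n, Continuous (Jn n)) (hJnsupp : ∀ n, HasCompactSupport (Jn n))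
    (hJnnonneg : ∀ n x, 0 ≤ Jn n x) (hJn0 : ∀ n, 0 < Jn n 0)
    (hJnmono : ∀ n x, Jn n x ≤ Jn (n+1) x) (hJnle : ∀ n x, Jn n x ≤ J x)
    (hJnlim : TendstoLocallyUniformly (fun n => Jn n) J Filter.atTop)
    (ν : ℕ → ℝ)
    (hmin : ∀ n, ∀ μ : ℝ,
      (∫ x, Jn n x * Real.exp (-(ν n) * x)) + c * ν n
        ≤ (∫ x, Jn n x * Real.exp (-μ * x)) + c * μ) :
    ∃ C : ℝ, ∀ n, |ν n| ≤ C := by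
  -- get a uniform lower bound for Jn near 0 from continuity of Jn 0
  have hc : ContinuousAt (Jn 0) 0 := (hJncont 0).continuousAt
  rw [Metric.continuousAt_iff] at hc
  obtain ⟨δ', hδ'pos, hδ'⟩ := hc (Jn 0 0 / 2) (by have := hJn0 0; positivity)
  set σ : ℝ := Jn 0 0 / 2 with hσdef
  set δ : ℝ := δ' / 4 with hδdef
  have hσpos : 0 < σ := by have := hJn0 0; positivity
  have hδpos : 0 < δ := by positivity
  have hlow : ∀ x, |x| ≤ 2 * δ → σ ≤ Jn 0 x := by
    intro x hx
    have hd : dist x 0 < δ' := by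
      rw [Real.dist_eq, sub_zero]
      calc |x| ≤ 2 * δ := hx
        _ < δ' := by rw [hδdef]; linarith
    have := hδ' hd
    rw [Real.dist_eq, abs_lt] at this
    rw [hσdef]; linarith [this.1]
  have hmonoall : ∀ n x, Jn 0 x ≤ Jn n x := by
    intro n x
    induction n with
    | zero => exact le_refl _
    | succ k ih => exact ih.trans (hJnmono k x)
  have hJnint : ∀ n, Integrable (Jn n) :=
    fun n => (hJncont n).integrable_of_hasCompactSupport (hJnsupp n)
  have hf_int : ∀ n (μ : ℝ), Integrable (fun x => Jn n x * Real.exp (-μ * x)) := by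
    intro n μ
    exact ((hJncont n).mul (by continuity)).integrable_of_hasCompactSupport
      ((hJnsupp n).mul_right)
  have hf_nonneg : ∀ n (μ : ℝ) x, 0 ≤ Jn n x * Real.exp (-μ * x) := by
    intro n μ x
    exact mul_nonneg (hJnnonneg n x) (Real.exp_pos _).le
  -- key lower bound on the integral
  have key : ∀ n, σ * Real.exp (δ * |ν n|) * δ ≤ ∫ x, Jn n x * Real.exp (-(ν n) * x) := by
    intro n
    rcases le_total (ν n) 0 with hν | hν
    · have habs : |ν n| = -(ν n) := abs_of_nonpos hν
      have hbound : ∀ x ∈ Icc δ (2 * δ),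
          σ * Real.exp (δ * |ν n|) ≤ Jn n x * Real.exp (-(ν n) * x) := by
        intro x hx
        obtain ⟨hx1, hx2⟩ := hx
        have h1 : σ ≤ Jn n x := by
          refine (hlow x ?_).trans (hmonoall n x)
          rw [abs_of_nonneg (hδpos.le.trans hx1)]; exact hx2
        have h2 : Real.exp (δ * |ν n|) ≤ Real.exp (-(ν n) * x) := by
          apply Real.exp_le_exp.2
          rw [habs]
          nlinarith
        exact mul_le_mul h1 h2 (Real.exp_pos _).le
          (le_trans hσpos.le h1)
      have hvol : (volume (Icc δ (2 * δ))).toReal = δ := by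
        rw [Real.volume_Icc, ENNReal.toReal_ofReal (by linarith)]
        ring
      have hset := setIntegral_ge_of_const_le_real measurableSet_Icc
        (by rw [Real.volume_Icc]; exact ENNReal.ofReal_ne_top) hbound
        ((hf_int n (ν n)).integrableOn)
      rw [measureReal_def, hvol] at hset
      refine hset.trans ?_
      exact setIntegral_le_integral (hf_int n (ν n))
        (Filter.Eventually.of_forall (hf_nonneg n (ν n)))
    · have habs : |ν n| = ν n := abs_of_nonneg hν
      have hbound : ∀ x ∈ Icc (-(2 * δ)) (-δ),
          σ * Real.exp (δ * |ν n|) ≤ Jn n x * Real.exp (-(ν n) * x) := by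
        intro x hx
        obtain ⟨hx1, hx2⟩ := hx
        have h1 : σ ≤ Jn n x := by
          refine (hlow x ?_).trans (hmonoall n x)
          rw [abs_of_nonpos (by linarith)]; linarith
        have h2 : Real.exp (δ * |ν n|) ≤ Real.exp (-(ν n) * x) := by
          apply Real.exp_le_exp.2
          rw [habs]
          nlinarith
        exact mul_le_mul h1 h2 (Real.exp_pos _).le
          (le_trans hσpos.le h1)
      have hvol : (volume (Icc (-(2 * δ)) (-δ))).toReal = δ := by
        rw [Real.volume_Icc, ENNReal.toReal_ofReal (by linarith)]
        ring
      have hset := setIntegral_ge_of_const_le_real measurableSet_Icc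
        (by rw [Real.volume_Icc]; exact ENNReal.ofReal_ne_top) hbound
        ((hf_int n (ν n)).integrableOn)
      rw [measureReal_def, hvol] at hset
      refine hset.trans ?_
      exact setIntegral_le_integral (hf_int n (ν n))
        (Filter.Eventually.of_forall (hf_nonneg n (ν n)))
  -- upper bound: η_n(ν_n) ≤ η_n(0) ≤ 1
  have hup : ∀ n, (∫ x, Jn n x * Real.exp (-(ν n) * x)) + c * ν n ≤ 1 := by
    intro n
    have h0 := hmin n 0
    have heq : (fun x => Jn n x * Real.exp (-(0 : ℝ) * x)) = Jn n := by
      funext x; simp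
    rw [heq] at h0
    have hle1 : ∫ x, Jn n x ≤ 1 := by
      rw [← hJint]
      exact integral_mono (hJnint n) hJL1 (hJnle n)
    calc (∫ x, Jn n x * Real.exp (-(ν n) * x)) + c * ν n
        ≤ (∫ x, Jn n x) + c * 0 := h0
      _ = ∫ x, Jn n x := by ring
      _ ≤ 1 := hle1
  -- combine: σ δ e^{δ t} ≤ 1 + |c| t with t = |ν n|
  have hcomb : ∀ n, σ * Real.exp (δ * |ν n|) * δ ≤ 1 + |c| * |ν n| := by
    intro n
    have h1 := (key n).trans (by linarith [hup n] :
      (∫ x, Jn n x * Real.exp (-(ν n) * x)) ≤ 1 - c * ν n)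
    have h2 : -(|c| * |ν n|) ≤ c * ν n := by
      rw [← abs_mul]; exact neg_abs_le _
    linarith
  refine ⟨max 1 (4 * (1 + |c|) / (σ * δ ^ 3)), fun n => ?_⟩
  set t : ℝ := |ν n| with htdef
  have ht0 : 0 ≤ t := abs_nonneg _
  have hexp : (δ * t) ^ 2 / 4 ≤ Real.exp (δ * t) :=
    stmt17_exp_quad _ (by positivity)
  have hq : σ * δ ^ 3 * t ^ 2 / 4 ≤ 1 + |c| * t := by
    have h := hcomb n
    rw [← htdef] at h
    nlinarith [hexp, hσpos, hδpos, mul_le_mul_of_nonneg_left hexp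
      (mul_nonneg hσpos.le hδpos.le)]
  rcases le_total t 1 with ht1 | ht1
  · exact le_max_of_le_left ht1
  · refine le_max_of_le_right ?_
    have ht' : (0 : ℝ) < t := lt_of_lt_of_le one_pos ht1
    rw [le_div_iff₀ (by positivity)]
    nlinarith [hq, ht1, ht']
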